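/- Let R be a Noetherian unique factorization domain and M a finitely generated R-module with no non-trivial pseudo-null submodule. Suppose q_1, …, q_l are pairwise non-associated prime elements of R and there exists an injective R-module homomorphism φ : ⊕_{i=1}^{l} R/(q_i) → M whose cokernel is pseudo-null. Then the set of associated prime ideals of M is exactly { (q_1), …, (q_l) }; that is, a prime ideal P of R has the form P = Ann_R(x) for some x ∈ M if and only if P = (q_i) for some i. -/

import Mathlib

open DirectSum

/-- Let `R` be a Noetherian UFD and `M` a finitely generated `R`-module with
no non-trivial pseudo-null submodule. If `q₁, …, q_l` are pairwise non-associated prime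
elements of `R` and there is an injective `R`-homomorphism `⊕ᵢ R/(qᵢ) → M` with pseudo-null
cokernel, then the associated primes of `M` are exactly `(q₁), …, (q_l)`. -/
theorem associated_primes_of_pseudo_iso
    (R : Type*) [CommRing R] [IsDomain R] [IsNoetherianRing R] [UniqueFactorizationMonoid R]
    (M : Type*) [AddCommGroup M] [Module R M] [Module.Finite R M]
    (hpn : ∀ N : Submodule R M,
      (∃ a b : R, IsRelPrime a b ∧ (∀ x ∈ N, a • x = 0) ∧ (∀ x ∈ N, b • x = 0)) → N = ⊥)
    (l : ℕ) (q : Fin l → R) (hq : ∀ i, Prime (q i))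
    (hna : ∀ i j, i ≠ j → ¬ Associated (q i) (q j))
    (φ : (⨁ i : Fin l, R ⧸ Ideal.span {q i}) →ₗ[R] M)
    (hφ : Function.Injective φ)
    (hcoker : ∃ a b : R, IsRelPrime a b ∧
      ∀ y : M ⧸ LinearMap.range φ, a • y = 0 ∧ b • y = 0) :
    ∀ P : Ideal R, P.IsPrime →
      ((∃ x : M, P = (Submodule.span R {x}).annihilator) ↔ ∃ i, P = Ideal.span {q i}) := by
  classical
  -- each `q i` kills the `i`-th quotient
  have hkill : ∀ (i : Fin l) (z : R ⧸ Ideal.span {q i}), q i • z = 0 := by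
    intro i z
    rw [Algebra.smul_def]
    have h0 : algebraMap R (R ⧸ Ideal.span {q i}) (q i) = 0 := by
      rw [Ideal.Quotient.algebraMap_eq, Ideal.Quotient.eq_zero_iff_mem]
      exact Ideal.mem_span_singleton_self _
    rw [h0, zero_mul]
  intro P hP
  constructor
  · rintro ⟨x, hx⟩
    have hmem : ∀ r : R, r ∈ P ↔ r • x = 0 := by
      intro r; rw [hx, Submodule.mem_annihilator_span_singleton]
    have hx0 : x ≠ 0 := by
      rintro rfl
      exact hP.ne_top ((Ideal.eq_top_iff_one _).2 ((hmem 1).2 (smul_zero 1)))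
    obtain ⟨a, b, hab, hk⟩ := hcoker
    have ha : a • x ∈ LinearMap.range φ := by
      have := (hk (Submodule.Quotient.mk x)).1
      rwa [← Submodule.Quotient.mk_smul, Submodule.Quotient.mk_eq_zero] at this
    have hb : b • x ∈ LinearMap.range φ := by
      have := (hk (Submodule.Quotient.mk x)).2
      rwa [← Submodule.Quotient.mk_smul, Submodule.Quotient.mk_eq_zero] at this
    -- find r with r • x ≠ 0 and r • x ∈ range φ
    have hr : ∃ r : R, r • x ≠ 0 ∧ r • x ∈ LinearMap.range φ := by
      by_cases ha0 : a • x = 0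
      · by_cases hb0 : b • x = 0
        · exfalso
          have hsp : Submodule.span R {x} = ⊥ := by
            refine hpn _ ⟨a, b, hab, ?_, ?_⟩ <;>
            · intro z hz
              obtain ⟨r, rfl⟩ := Submodule.mem_span_singleton.1 hz
              rw [smul_comm]
              first
                | (rw [ha0, smul_zero])
                | (rw [hb0, smul_zero])
          exact hx0 (Submodule.span_singleton_eq_bot.1 hsp)
        · exact ⟨b, hb0, hb⟩
      · exact ⟨a, ha0, ha⟩
    obtain ⟨r, hr0, y, hy⟩ := hr
    have hrP : r ∉ P := fun h => hr0 ((hmem r).1 h)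
    have hAnnY : ∀ s : R, s • y = 0 ↔ s ∈ P := by
      intro s
      constructor
      · intro h
        have h1 : (s * r) • x = 0 := by
          rw [mul_smul, ← hy, ← map_smul, h, map_zero]
        exact (hP.mem_or_mem ((hmem _).2 h1)).resolve_right hrP
      · intro h
        apply hφ
        rw [map_smul, hy, map_zero, smul_comm, (hmem s).1 h, smul_zero]
    have hy0 : y ≠ 0 := by
      rintro rfl
      exact hr0 (by rw [← hy, map_zero])
    -- the product of the q i over the support of y kills y
    set T : Finset (Fin l) := Finset.univ.filter (fun i => y i ≠ 0) with hT
    have hQ : (∏ i ∈ T, q i) • y = 0 := by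
      refine DFinsupp.ext fun i => ?_
      rw [DirectSum.smul_apply, DirectSum.zero_apply]
      by_cases hi : y i = 0
      · rw [hi, smul_zero]
      · have hiT : i ∈ T := Finset.mem_filter.2 ⟨Finset.mem_univ _, hi⟩
        rw [← Finset.mul_prod_erase T q hiT, mul_comm, mul_smul, hkill, smul_zero]
    have hQP : (∏ i ∈ T, q i) ∈ P := (hAnnY _).1 hQ
    haveI := hP
    obtain ⟨j, hjT, hqjP⟩ := Ideal.IsPrime.prod_mem_iff.1 hQP
    have hyj : y j ≠ 0 := (Finset.mem_filter.1 hjT).2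
    refine ⟨j, le_antisymm ?_ ?_⟩
    · intro s hs
      have h1 : s • y = 0 := (hAnnY s).2 hs
      have h2 : s • (y j) = 0 := by
        have := congrArg (fun z => z j) h1
        simpa [DirectSum.smul_apply] using this
      obtain ⟨t, ht⟩ := Ideal.Quotient.mk_surjective (y j)
      have htq : ¬ q j ∣ t := by
        intro hdvd
        apply hyj
        rw [← ht, Ideal.Quotient.eq_zero_iff_mem, Ideal.mem_span_singleton]
        exact hdvd
      have h3 : q j ∣ s * t := by
        rw [← Ideal.mem_span_singleton, ← Ideal.Quotient.eq_zero_iff_mem]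
        have : s • (Ideal.Quotient.mk (Ideal.span {q j}) t) = 0 := by rw [ht]; exact h2
        rw [Algebra.smul_def, Ideal.Quotient.algebraMap_eq, ← map_mul] at this
        exact this
      rw [Ideal.mem_span_singleton]
      exact ((hq j).2.2 _ _ h3).resolve_right htq
    · exact (Ideal.span_singleton_le_iff_mem _).2 hqjP
  · rintro ⟨i, rfl⟩
    refine ⟨φ (DirectSum.lof R (Fin l) (fun i => R ⧸ Ideal.span {q i}) i 1), ?_⟩
    ext r
    rw [Submodule.mem_annihilator_span_singleton, ← map_smul, ← map_smul]
    have hsm : r • (1 : R ⧸ Ideal.span {q i}) = Ideal.Quotient.mk _ r := by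
      rw [Algebra.smul_def, mul_one, Ideal.Quotient.algebraMap_eq]
    constructor
    · intro h
      have h0 : Ideal.Quotient.mk (Ideal.span {q i}) r = 0 :=
        Ideal.Quotient.eq_zero_iff_mem.2 h
      rw [hsm, h0, map_zero, map_zero]
    · intro h
      have h1 : DirectSum.lof R (Fin l) (fun i => R ⧸ Ideal.span {q i}) i
          (r • 1) = 0 := hφ (by rw [h, map_zero])
      have h2 := congrArg (fun z => z i) h1
      simp only [DirectSum.lof_apply] at h2
      rw [hsm] at h2
      rw [← Ideal.Quotient.eq_zero_iff_mem]
      simpa using h2
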